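/- Let m, b, k : ℝ with 0 < m, 0 < b, 0 < k, let g : ℝ → ℝ be arbitrary, and let X, Y : ℝ → ℝ both solve the damped oscillator equation with forcing g. Then Filter.Tendsto (fun t => X t - Y t) Filter.atTop (nhds 0); i.e., the asymptotic dynamics of the damped oscillator are independent of initial conditions. -/

import Mathlib

open Filter Real

set_option maxHeartbeats 1000000

/-- `X` solves the damped oscillator equation `m ẍ + b ẋ + k x = g` with forcing `g`:
`X` is twice differentiable and the equation holds at every time `t`. -/
def SolvesDampedOsc (m b k : ℝ) (g : ℝ → ℝ) (X : ℝ → ℝ) : Prop :=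
  Differentiable ℝ X ∧ Differentiable ℝ (deriv X) ∧
    ∀ t : ℝ, m * deriv (deriv X) t + b * deriv X t + k * X t = g t

/-- The asymptotic dynamics of a forced damped oscillator are independent of initial
conditions: any two solutions with the same forcing agree asymptotically. -/
theorem damped_osc_asymptotics_independent_of_initial_conditions
    (m b k : ℝ) (hm : 0 < m) (hb : 0 < b) (hk : 0 < k) (g : ℝ → ℝ)
    (X Y : ℝ → ℝ) (hX : SolvesDampedOsc m b k g X) (hY : SolvesDampedOsc m b k g Y) :
    Tendsto (fun t => X t - Y t) atTop (nhds 0) := by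
  obtain ⟨hX1, hX2, hX3⟩ := hX
  obtain ⟨hY1, hY2, hY3⟩ := hY
  set u : ℝ → ℝ := fun t => X t - Y t with hu_def
  set v : ℝ → ℝ := fun t => deriv X t - deriv Y t with hv_def
  set w : ℝ → ℝ := fun t => deriv (deriv X) t - deriv (deriv Y) t with hw_def
  have hu : ∀ t, HasDerivAt u (v t) t := fun t =>
    ((hX1 t).hasDerivAt.sub (hY1 t).hasDerivAt)
  have hv : ∀ t, HasDerivAt v (w t) t := fun t =>
    ((hX2 t).hasDerivAt.sub (hY2 t).hasDerivAt)
  have heq : ∀ t, m * w t + b * v t + k * u t = 0 := by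
    intro t
    have h1 := hX3 t
    have h2 := hY3 t
    simp only [hu_def, hv_def, hw_def]
    ring_nf
    linarith
  clear hu_def hv_def hw_def
  clear_value u v w
  -- choose small ε
  set ε : ℝ := min (1/2) (min (k/(2*m)) (b/(2*m))) with hε_def
  have hε : 0 < ε := by
    refine lt_min (by norm_num) (lt_min ?_ ?_) <;> positivity
  have hε1 : ε ≤ 1/2 := min_le_left _ _
  have hεk : ε * m ≤ k/2 := by
    have h := (min_le_right (1/2:ℝ) _).trans (min_le_left (k/(2*m)) (b/(2*m)))
    calc ε * m ≤ (k/(2*m)) * m := by nlinarith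
    _ = k/2 := by field_simp
  have hεb : ε * m ≤ b/2 := by
    have h := (min_le_right (1/2:ℝ) _).trans (min_le_right (k/(2*m)) (b/(2*m)))
    calc ε * m ≤ (b/(2*m)) * m := by nlinarith
    _ = b/2 := by field_simp
  -- choose decay rate c
  set c : ℝ := min (b/(m+ε*m)) (2*ε*k/(k+ε*m+ε*b)) with hc_def
  have hden1 : (0:ℝ) < m + ε*m := by nlinarith
  have hden2 : (0:ℝ) < k + ε*m + ε*b := by nlinarith
  have hc : 0 < c := lt_min (by positivity) (by positivity)
  have hc1 : c * (m + ε*m) ≤ b := by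
    have := min_le_left (b/(m+ε*m)) (2*ε*k/(k+ε*m+ε*b))
    rw [le_div_iff₀ hden1] at this
    linarith
  have hc2 : c * (k + ε*m + ε*b) ≤ 2*ε*k := by
    have := min_le_right (b/(m+ε*m)) (2*ε*k/(k+ε*m+ε*b))
    rw [le_div_iff₀ hden2] at this
    linarith
  clear hc_def hε_def
  clear_value ε c
  -- Lyapunov function
  set V : ℝ → ℝ := fun t => m * (v t)^2 + k * (u t)^2 + ε * (2*m*(u t)*(v t) + b*(u t)^2)
    with hV_def
  have hVderiv : ∀ t, HasDerivAt V ((2*ε*m - 2*b)*(v t)^2 - 2*ε*k*(u t)^2) t := by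
    intro t
    have h1 : HasDerivAt (fun s => m * (v s)^2) (m * (2 * v t ^ 1 * w t)) t :=
      ((hv t).pow 2).const_mul m
    have h2 : HasDerivAt (fun s => k * (u s)^2) (k * (2 * u t ^ 1 * v t)) t :=
      ((hu t).pow 2).const_mul k
    have h3 : HasDerivAt (fun s => ε * (2*m*(u s)*(v s) + b*(u s)^2))
        (ε * ((2*m*(v t)*(v t) + 2*m*(u t)*(w t)) + b * (2 * u t ^ 1 * v t))) t := by
      have ha : HasDerivAt (fun s => 2*m*(u s)*(v s))
          (2*m*(v t)*(v t) + 2*m*(u t)*(w t)) t := by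
        exact (((hu t).const_mul (2*m)).mul (hv t))
      exact (ha.add (((hu t).pow 2).const_mul b)).const_mul ε
    have := (h1.add h2).add h3
    refine this.congr_deriv (Eq.symm ?_)
    have he := heq t
    linear_combination (-(2 * v t) - 2 * ε * u t) * he
  -- W = V * exp(c t) is antitone
  set W : ℝ → ℝ := fun t => V t * Real.exp (c*t) with hW_def
  have hWderiv : ∀ t, HasDerivAt W
      ((((2*ε*m - 2*b)*(v t)^2 - 2*ε*k*(u t)^2) + c * V t) * Real.exp (c*t)) t := by
    intro t
    have hexp : HasDerivAt (fun s => Real.exp (c*s)) (Real.exp (c*t) * c) t := by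
      simpa using ((hasDerivAt_id t).const_mul c).exp
    have := (hVderiv t).mul hexp
    refine this.congr_deriv ?_
    ring
  have hWnonpos : ∀ t, (((2*ε*m - 2*b)*(v t)^2 - 2*ε*k*(u t)^2) + c * V t) * Real.exp (c*t) ≤ 0 := by
    intro t
    have hVle : V t ≤ (m+ε*m)*(v t)^2 + (k+ε*m+ε*b)*(u t)^2 := by
      simp only [hV_def]
      nlinarith [mul_nonneg (mul_nonneg hε.le hm.le) (sq_nonneg (u t - v t))]
    have hcV : c * V t ≤ b*(v t)^2 + 2*ε*k*(u t)^2 := by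
      nlinarith [mul_le_mul_of_nonneg_left hVle hc.le,
        mul_le_mul_of_nonneg_right hc1 (sq_nonneg (v t)),
        mul_le_mul_of_nonneg_right hc2 (sq_nonneg (u t))]
    have hv2 : (2*ε*m - 2*b + b) * (v t)^2 ≤ 0 :=
      mul_nonpos_of_nonpos_of_nonneg (by nlinarith) (sq_nonneg _)
    have h0 : ((2*ε*m - 2*b)*(v t)^2 - 2*ε*k*(u t)^2) + c * V t ≤ 0 := by nlinarith
    exact mul_nonpos_of_nonpos_of_nonneg h0 (Real.exp_pos _).le
  have hWanti : Antitone W := by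
    apply antitone_of_deriv_nonpos
    · exact fun t => (hWderiv t).differentiableAt
    · intro t
      rw [(hWderiv t).deriv]
      exact hWnonpos t
  -- lower bound on V
  have hVlow : ∀ t, (k/2) * (u t)^2 ≤ V t := by
    intro t
    simp only [hV_def]
    have hem : ε * m ≤ (1/2) * m := mul_le_mul_of_nonneg_right hε1 hm.le
    have e1 : 0 ≤ ε*m*(u t + v t)^2 :=
      mul_nonneg (mul_nonneg hε.le hm.le) (sq_nonneg _)
    have e2 : 0 ≤ ε*b*(u t)^2 := mul_nonneg (mul_nonneg hε.le hb.le) (sq_nonneg _)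
    have e3 : 0 ≤ (m - ε*m)*(v t)^2 := mul_nonneg (by linarith) (sq_nonneg _)
    have e4 : 0 ≤ (k/2 - ε*m)*(u t)^2 := mul_nonneg (by linarith) (sq_nonneg _)
    nlinarith [e1, e2, e3, e4]
  have hWV : ∀ t, W t = V t * Real.exp (c*t) := fun t => rfl
  clear hV_def hW_def
  clear_value V W
  -- squeeze: u^2 tends to 0
  have hu2 : Tendsto (fun t => (u t)^2) atTop (nhds 0) := by
    apply squeeze_zero' (Eventually.of_forall fun t => sq_nonneg (u t))
      (f := fun t => (u t)^2) (g := fun t => (2/k) * V 0 * (Real.exp (c*t))⁻¹)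
    · filter_upwards [eventually_ge_atTop (0:ℝ)] with t ht
      have hWle : W t ≤ W 0 := hWanti ht
      have h0 : V t * Real.exp (c*t) ≤ V 0 := by
        have hW0 : W 0 = V 0 := by rw [hWV 0, mul_zero, Real.exp_zero, mul_one]
        calc V t * Real.exp (c*t) = W t := (hWV t).symm
          _ ≤ W 0 := hWle
          _ = V 0 := hW0
      have hVt : V t ≤ V 0 * (Real.exp (c*t))⁻¹ := by
        rw [← div_eq_mul_inv, le_div_iff₀ (Real.exp_pos _)]
        exact h0
      have h1 : (u t)^2 ≤ (2/k) * V t := by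
        rw [div_mul_eq_mul_div, le_div_iff₀ hk]
        nlinarith [hVlow t]
      calc (u t)^2 ≤ (2/k) * V t := h1
        _ ≤ (2/k) * (V 0 * (Real.exp (c*t))⁻¹) :=
            mul_le_mul_of_nonneg_left hVt (by positivity)
        _ = (2/k) * V 0 * (Real.exp (c*t))⁻¹ := by ring
    · have hexp : Tendsto (fun t : ℝ => Real.exp (c*t)) atTop atTop :=
        Real.tendsto_exp_atTop.comp (Tendsto.const_mul_atTop hc tendsto_id)
      have := hexp.inv_tendsto_atTop
      simpa using this.const_mul ((2/k) * V 0)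
  -- conclude u tends to 0
  have habs : Tendsto (fun t => |u t|) atTop (nhds 0) := by
    have hsqrt : Tendsto (fun t => Real.sqrt ((u t)^2)) atTop (nhds (Real.sqrt 0)) :=
      (Real.continuous_sqrt.tendsto 0).comp hu2
    rw [Real.sqrt_zero] at hsqrt
    simpa [Real.sqrt_sq_eq_abs] using hsqrt
  exact (tendsto_zero_iff_abs_tendsto_zero u).mpr habs
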